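/- arXiv:2007.09874 — 2 statements merged into one kernel-verified Lean document; each statement's English description precedes it below -/
import Mathlib

section
/- For every dimension d ≥ 1 and every k with 0 ≤ k ≤ d-1, there exists a constant c_d ∈ (0,1) (depending only on d) with the following property: for every compact convex set B ⊆ ℝ^d with nonempty interior, every ε ∈ (0,1), and every (k, c_d·ε)-net S for [0,1]^d, there exists a set S′ of k-flats with |S′| = |S| such that every compact convex set Ξ ⊆ ℝ^d with vol(Ξ ∩ B) ≥ ε·vol(B) is intersected by some flat in S′. -/
open MeasureTheory

noncomputable section

/-- The unit cube `[0,1]^d` in `ℝ^d`. -/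
def unitCube (d : ℕ) : Set (EuclideanSpace ℝ (Fin d)) :=
  {x | ∀ i, x i ∈ Set.Icc (0 : ℝ) 1}

/-- A `k`-flat in `ℝ^d`: a (nonempty) affine subspace of dimension `k`. -/
def IsKFlat (d k : ℕ) (f : AffineSubspace ℝ (EuclideanSpace ℝ (Fin d))) : Prop :=
  (f : Set (EuclideanSpace ℝ (Fin d))).Nonempty ∧ Module.finrank ℝ f.direction = k

/-- A family `S` of flats is a `(k,ε)`-net for `[0,1]^d` if every compact convex set `Ξ`
with `vol (Ξ ∩ [0,1]^d) ≥ ε` is intersected by some flat of `S`. -/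
def IsKENet (d : ℕ) (ε : ℝ)
    (S : Set (AffineSubspace ℝ (EuclideanSpace ℝ (Fin d)))) : Prop :=
  ∀ Ξ : Set (EuclideanSpace ℝ (Fin d)), IsCompact Ξ → Convex ℝ Ξ →
    ENNReal.ofReal ε ≤ volume (Ξ ∩ unitCube d) →
    ∃ f ∈ S, (Ξ ∩ (f : Set (EuclideanSpace ℝ (Fin d)))).Nonempty

/-- The standard corner simplex `{x : 0 ≤ xᵢ, ∑ xᵢ ≤ 1}`. -/
def cornerSimplex (d : ℕ) : Set (EuclideanSpace ℝ (Fin d)) :=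
  {x | (∀ i, 0 ≤ x i) ∧ ∑ i, x i ≤ 1}

lemma cornerSimplex_vol_pos (d : ℕ) : 0 < volume (cornerSimplex d) := by
  set U : Set (EuclideanSpace ℝ (Fin d)) :=
    ⋂ i, (fun x : EuclideanSpace ℝ (Fin d) => x i) ⁻¹' Set.Ioo 0 (1 / (d + 1)) with hU
  have hUopen : IsOpen U := isOpen_iInter_of_finite fun i =>
    (isOpen_Ioo).preimage (EuclideanSpace.proj i).continuous
  have hUsub : U ⊆ cornerSimplex d := by
    intro x hx
    simp only [hU, Set.mem_iInter, Set.mem_preimage, Set.mem_Ioo] at hx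
    refine ⟨fun i => (hx i).1.le, ?_⟩
    calc ∑ i, x i ≤ ∑ _i : Fin d, 1 / ((d : ℝ) + 1) :=
          Finset.sum_le_sum fun i _ => (hx i).2.le
      _ = d * (1 / ((d : ℝ) + 1)) := by simp [mul_comm]
      _ ≤ 1 := by
          rw [mul_one_div, div_le_one (by positivity)]
          linarith
  have hUne : U.Nonempty := by
    refine ⟨WithLp.toLp 2 (fun _ => 1 / (2 * ((d : ℝ) + 1)) : Fin d → ℝ), ?_⟩
    simp only [hU, Set.mem_iInter, Set.mem_preimage, Set.mem_Ioo, PiLp.toLp_apply]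
    intro i
    constructor
    · positivity
    · rw [div_lt_div_iff₀ (by positivity) (by positivity)]
      nlinarith [Nat.cast_nonneg (α := ℝ) d]
  exact lt_of_lt_of_le (hUopen.measure_pos volume hUne) (measure_mono hUsub)

lemma cornerSimplex_vol_lt_top (d : ℕ) : volume (cornerSimplex d) < ⊤ := by
  have hsub : cornerSimplex d ⊆ Metric.closedBall 0 (d + 1) := by
    intro x hx
    obtain ⟨h0, h1⟩ := hx
    have hxi : ∀ i, |x i| ≤ 1 := by
      intro i
      rw [abs_of_nonneg (h0 i)]
      calc x i ≤ ∑ j, x j := Finset.single_le_sum (fun j _ => h0 j) (Finset.mem_univ i)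
        _ ≤ 1 := h1
    rw [Metric.mem_closedBall, dist_zero_right, EuclideanSpace.norm_eq]
    have : Real.sqrt (∑ i, ‖x i‖ ^ 2) ≤ Real.sqrt d := by
      apply Real.sqrt_le_sqrt
      calc ∑ i, ‖x i‖ ^ 2 ≤ ∑ _i : Fin d, 1 := by
            refine Finset.sum_le_sum fun i _ => ?_
            have := hxi i
            rw [Real.norm_eq_abs]
            nlinarith [abs_nonneg (x i)]
        _ = d := by simp
    refine this.trans ?_
    calc Real.sqrt d ≤ Real.sqrt ((d+1)^2) := by
          apply Real.sqrt_le_sqrt; nlinarith [Nat.cast_nonneg (α := ℝ) d]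
      _ = d + 1 := by rw [Real.sqrt_sq (by positivity)]
  exact lt_of_le_of_lt (measure_mono hsub)
    (isCompact_closedBall _ _).measure_lt_top

lemma exists_transform (d : ℕ) (hd : 1 ≤ d) (B : Set (EuclideanSpace ℝ (Fin d)))
    (hBc : IsCompact B) (hBconv : Convex ℝ B) (hBint : (interior B).Nonempty) :
    ∃ T : EuclideanSpace ℝ (Fin d) ≃ᵃ[ℝ] EuclideanSpace ℝ (Fin d),
      B ⊆ ⇑T '' unitCube d ∧
      ∀ A : Set (EuclideanSpace ℝ (Fin d)),
        volume (cornerSimplex d) * volume A ≤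
          ENNReal.ofReal (2 ^ d) * volume B * volume (⇑T.symm '' A) := by
  classical
  haveI : Nonempty (Fin d) := ⟨⟨0, hd⟩⟩
  set e : Module.Basis (Fin d) ℝ (EuclideanSpace ℝ (Fin d)) := (EuclideanSpace.basisFun (Fin d) ℝ).toBasis with he
  -- the maximization domain
  set K : Set (Fin (d + 1) → EuclideanSpace ℝ (Fin d)) := Set.univ.pi fun _ => B with hK
  have hKc : IsCompact K := isCompact_univ_pi fun _ => hBc
  obtain ⟨x₀, hx₀⟩ := hBint
  obtain ⟨r, hr, hball⟩ := Metric.isOpen_iff.1 isOpen_interior x₀ hx₀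
  have hx₀B : x₀ ∈ B := interior_subset hx₀
  have hKne : K.Nonempty := ⟨fun _ => x₀, by intro i _; exact hx₀B⟩
  -- the function to maximize
  set Φ : (Fin (d + 1) → EuclideanSpace ℝ (Fin d)) → ℝ := fun u => |e.det fun i => u i.succ - u 0| with hΦ
  have hdet_eq : ∀ v : Fin d → EuclideanSpace ℝ (Fin d), e.det v = Matrix.det (Matrix.of fun i j : Fin d => v j i) := by
    intro v
    rw [Module.Basis.det_apply]
    rfl
  have hΦcont : Continuous Φ := by
    have hrw : Φ = fun u => |Matrix.det (Matrix.of fun i j : Fin d => (u j.succ - u 0) i)| := by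
      funext u; simp only [hΦ]; rw [hdet_eq]
    rw [hrw]
    refine continuous_abs.comp (Continuous.matrix_det ?_)
    refine continuous_matrix fun i j => ?_
    exact ((EuclideanSpace.proj i).continuous.comp (continuous_apply j.succ)).sub
      ((EuclideanSpace.proj i).continuous.comp (continuous_apply 0))
  obtain ⟨v, hvK, hvmax⟩ := hKc.exists_isMaxOn hKne hΦcont.continuousOn
  have hvB : ∀ j, v j ∈ B := fun j => hvK j (Set.mem_univ j)
  set w : Fin d → EuclideanSpace ℝ (Fin d) := fun i => v i.succ - v 0 with hw
  set M : ℝ := Φ v with hM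
  have hMax : ∀ u ∈ K, Φ u ≤ M := fun u hu => hvmax hu
  -- positivity of the maximum
  have hMpos : 0 < M := by
    set u : Fin (d + 1) → EuclideanSpace ℝ (Fin d) :=
      Fin.cases x₀ (fun i => x₀ + (r / 2) • e i) with hu
    have huK : u ∈ K := by
      intro j _
      induction j using Fin.cases with
      | zero => simpa [hu] using hx₀B
      | succ i =>
        have hmem : u i.succ ∈ Metric.ball x₀ r := by
          have hnorm : ‖e i‖ = 1 := by
            simp [he, EuclideanSpace.basisFun]
          simp only [hu, Fin.cases_succ, Metric.mem_ball, dist_self_add_left]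
          rw [norm_smul, hnorm]
          simp only [mul_one, Real.norm_eq_abs, abs_of_pos (by linarith : (0:ℝ) < r / 2)]
          linarith
        exact interior_subset (hball hmem)
    have hΦu : Φ u = (r / 2) ^ d := by
      have harg : (fun i : Fin d => u i.succ - u 0) = fun i => (r / 2) • e i := by
        funext i; simp [hu]
      simp only [hΦ, harg]
      have := MultilinearMap.map_smul_univ e.det.toMultilinearMap (fun _ : Fin d => r / 2) ⇑e
      simp only [AlternatingMap.coe_multilinearMap] at this
      rw [show (fun i : Fin d => (r/2) • e i) = (fun i : Fin d => (fun _ : Fin d => r/2) i • e i) from rfl,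
        this, Module.Basis.det_self]
      simp [abs_of_pos (by positivity : (0:ℝ) < r ^ d / 2 ^ d), Finset.prod_const, div_pow]
    calc (0:ℝ) < (r / 2) ^ d := by positivity
      _ = Φ u := hΦu.symm
      _ ≤ M := hMax u huK
  have hMdet : |e.det w| = M := rfl
  have hdetw : e.det w ≠ 0 := by
    intro h0
    rw [h0] at hMdet
    simp at hMdet
    exact absurd hMdet.symm (ne_of_gt hMpos)
  -- `w` is a basis
  have hli : LinearIndependent ℝ w :=
    ((Module.Basis.is_basis_iff_det e).2 (isUnit_iff_ne_zero.2 hdetw)).1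
  set wb : Module.Basis (Fin d) ℝ (EuclideanSpace ℝ (Fin d)) :=
    basisOfLinearIndependentOfCardEqFinrank hli (by simp) with hwb
  have hwbcoe : ⇑wb = w := coe_basisOfLinearIndependentOfCardEqFinrank _ _
  -- Cramer-type bound
  have hdet_update : ∀ y : EuclideanSpace ℝ (Fin d), ∀ i,
      e.det (Function.update w i y) = wb.repr y i * e.det w := by
    intro y i
    have hy : y = ∑ j, wb.repr y j • w j := by
      conv_lhs => rw [← Module.Basis.sum_repr wb y]
      simp [hwbcoe]
    conv_lhs => rw [hy]
    rw [AlternatingMap.map_update_sum]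
    rw [Finset.sum_eq_single i]
    · rw [AlternatingMap.map_update_smul, Function.update_eq_self, smul_eq_mul]
    · intro j _ hji
      rw [AlternatingMap.map_update_smul]
      have hz : e.det (Function.update w i (w j)) = 0 :=
        AlternatingMap.map_eq_zero_of_eq _ _
          (show (Function.update w i (w j)) i = (Function.update w i (w j)) j by
            rw [Function.update_self, Function.update_of_ne hji]) (Ne.symm hji)
      rw [hz, smul_zero]
    · intro h; exact absurd (Finset.mem_univ i) h
  have hcoord : ∀ x ∈ B, ∀ i, |wb.repr (x - v 0) i| ≤ 1 := by
    intro x hx i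
    have hupd : (fun j : Fin d =>
        (Function.update v i.succ x) j.succ - (Function.update v i.succ x) 0)
        = Function.update w i (x - v 0) := by
      funext j
      rcases eq_or_ne j i with hji | hji
      · subst hji
        rw [Function.update_self, Function.update_self,
          Function.update_of_ne (Fin.succ_ne_zero j).symm]
      · rw [Function.update_of_ne (fun h => hji (Fin.succ_injective _ h)),
          Function.update_of_ne (Fin.succ_ne_zero i).symm, Function.update_of_ne hji]
    have hmem : Function.update v i.succ x ∈ K := by
      intro j _
      rcases eq_or_ne j i.succ with h | h
      · subst h; rw [Function.update_self]; exact hx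
      · rw [Function.update_of_ne h]; exact hvB j
    have hΦle := hMax _ hmem
    have heq : Φ (Function.update v i.succ x) = |wb.repr (x - v 0) i| * M := by
      simp only [hΦ, hupd, hdet_update, abs_mul, hMdet]
    rw [heq] at hΦle
    exact le_of_mul_le_mul_right (by rw [one_mul]; exact hΦle) hMpos
  -- the linear map sending the standard basis to `w`
  set Lw : EuclideanSpace ℝ (Fin d) ≃ₗ[ℝ] EuclideanSpace ℝ (Fin d) :=
    e.equiv wb (Equiv.refl _) with hLwdef
  have hLwe : ∀ i, Lw (e i) = w i := by
    intro i
    rw [hLwdef, Module.Basis.equiv_apply, Equiv.refl_apply, ← hwbcoe]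
  have hLwapply : ∀ t : EuclideanSpace ℝ (Fin d), Lw t = ∑ i, t i • w i := by
    intro t
    conv_lhs => rw [← Module.Basis.sum_repr e t]
    rw [map_sum]
    simp only [LinearEquiv.map_smul, hLwe]
    rfl
  have hdetLw : LinearMap.det (Lw : EuclideanSpace ℝ (Fin d) →ₗ[ℝ] EuclideanSpace ℝ (Fin d))
      = e.det w := by
    rw [← LinearMap.det_toMatrix e, Module.Basis.det_apply]
    congr 1
    ext i j
    rw [LinearMap.toMatrix_apply, Module.Basis.toMatrix_apply]
    exact congrArg (fun z => e.repr z i) (hLwe j)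
  -- the simplex with vertices `v 0, …, v d` is inside `B`
  have hsimplex : (fun y => v 0 + y) '' (⇑Lw '' cornerSimplex d) ⊆ B := by
    rintro _ ⟨_, ⟨t, ht, rfl⟩, rfl⟩
    obtain ⟨ht0, ht1⟩ := ht
    rw [hLwapply]
    have hsum : v 0 + ∑ i, t i • w i
        = ∑ j : Fin (d + 1), (Fin.cons (1 - ∑ i, t i) t : Fin (d + 1) → ℝ) j • v j := by
      rw [Fin.sum_univ_succ]
      simp only [Fin.cons_zero, Fin.cons_succ, hw]
      rw [sub_smul, one_smul]
      simp only [smul_sub]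
      rw [Finset.sum_sub_distrib, ← Finset.sum_smul]
      abel
    change v 0 + ∑ i, t i • w i ∈ B
    rw [hsum]
    refine hBconv.sum_mem ?_ ?_ fun j _ => hvB j
    · intro j _
      induction j using Fin.cases with
      | zero => rw [Fin.cons_zero]; linarith
      | succ i => rw [Fin.cons_succ]; exact ht0 i
    · rw [Fin.sum_univ_succ]
      simp only [Fin.cons_zero, Fin.cons_succ]
      ring
  -- the affine transformation
  set L2 : EuclideanSpace ℝ (Fin d) ≃ₗ[ℝ] EuclideanSpace ℝ (Fin d) :=
    (LinearEquiv.smulOfNeZero ℝ _ 2 two_ne_zero).trans Lw with hL2def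
  set t₀ : EuclideanSpace ℝ (Fin d) := v 0 - ∑ i, w i with ht₀def
  set T : EuclideanSpace ℝ (Fin d) ≃ᵃ[ℝ] EuclideanSpace ℝ (Fin d) :=
    L2.toAffineEquiv.trans (AffineEquiv.constVAdd ℝ _ t₀) with hTdef
  have hTapply : ∀ x, T x = t₀ + Lw ((2 : ℝ) • x) := by
    intro x
    rw [hTdef]
    simp only [AffineEquiv.trans_apply, LinearEquiv.coe_toAffineEquiv,
      AffineEquiv.constVAdd_apply, vadd_eq_add]
    rfl
  have hdetL2 : LinearMap.det (L2 : EuclideanSpace ℝ (Fin d) →ₗ[ℝ] EuclideanSpace ℝ (Fin d))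
      = 2 ^ d * e.det w := by
    have hcomp : (L2 : EuclideanSpace ℝ (Fin d) →ₗ[ℝ] EuclideanSpace ℝ (Fin d))
        = (Lw : EuclideanSpace ℝ (Fin d) →ₗ[ℝ] EuclideanSpace ℝ (Fin d)) ∘ₗ
          ((2 : ℝ) • (LinearMap.id : EuclideanSpace ℝ (Fin d) →ₗ[ℝ] EuclideanSpace ℝ (Fin d))) := by
      ext x
      rfl
    rw [hcomp, LinearMap.det_comp, hdetLw, LinearMap.det_smul, LinearMap.det_id]
    simp [finrank_euclideanSpace]
    ring
  -- translation invariance of volume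
  have htrans : ∀ (a : EuclideanSpace ℝ (Fin d)) (s : Set (EuclideanSpace ℝ (Fin d))),
      volume ((fun y => a + y) '' s) = volume s := by
    intro a s
    have himg : (fun y => a + y) '' s = (fun y => -a + y) ⁻¹' s := by
      ext z
      constructor
      · rintro ⟨y, hy, rfl⟩
        simpa [Set.mem_preimage] using hy
      · intro h
        exact ⟨-a + z, h, by show a + (-a + z) = z; abel⟩
    rw [himg, measure_preimage_add]
  have hvolT : ∀ A : Set (EuclideanSpace ℝ (Fin d)),
      volume (⇑T '' A) = ENNReal.ofReal (2 ^ d * M) * volume A := by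
    intro A
    have hcompT : ⇑T = (fun y => t₀ + y) ∘
        ⇑(L2 : EuclideanSpace ℝ (Fin d) →ₗ[ℝ] EuclideanSpace ℝ (Fin d)) := by
      funext x
      rw [hTapply]
      rfl
    rw [hcompT, Set.image_comp, htrans, Measure.addHaar_image_linearMap, hdetL2]
    congr 1
    rw [abs_mul, abs_of_pos (by positivity : (0:ℝ) < (2:ℝ) ^ d), hMdet]
  have hML : ENNReal.ofReal M * volume (cornerSimplex d) ≤ volume B := by
    calc ENNReal.ofReal M * volume (cornerSimplex d)
        = volume (⇑Lw '' cornerSimplex d) := by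
          rw [show ⇑Lw '' cornerSimplex d
              = ⇑(Lw : EuclideanSpace ℝ (Fin d) →ₗ[ℝ] EuclideanSpace ℝ (Fin d)) '' cornerSimplex d
              from rfl, Measure.addHaar_image_linearMap, hdetLw, hMdet]
      _ = volume ((fun y => v 0 + y) '' (⇑Lw '' cornerSimplex d)) := (htrans _ _).symm
      _ ≤ volume B := measure_mono hsimplex
  refine ⟨T, ?_, ?_⟩
  · -- B is inside the image of the unit cube
    intro x hx
    refine ⟨WithLp.toLp 2 (fun i => ((wb.repr (x - v 0)) i + 1) / 2 : Fin d → ℝ), ?_, ?_⟩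
    · intro i
      have h := abs_le.1 (hcoord x hx i)
      constructor
      · show (0:ℝ) ≤ ((wb.repr (x - v 0)) i + 1) / 2
        linarith [h.1]
      · show ((wb.repr (x - v 0)) i + 1) / 2 ≤ 1
        linarith [h.2]
    · rw [hTapply, hLwapply]
      have hterm : (∑ i, (((2:ℝ) •
            WithLp.toLp 2 (fun i => ((wb.repr (x - v 0)) i + 1) / 2 : Fin d → ℝ) :
              EuclideanSpace ℝ (Fin d)) i) • w i)
          = ∑ i, ((wb.repr (x - v 0)) i • w i + w i) := by
        refine Finset.sum_congr rfl fun i _ => ?_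
        have h2 : (((2:ℝ) •
            WithLp.toLp 2 (fun i => ((wb.repr (x - v 0)) i + 1) / 2 : Fin d → ℝ) :
              EuclideanSpace ℝ (Fin d)) i) = (wb.repr (x - v 0)) i + 1 := by
          show (2:ℝ) * (((wb.repr (x - v 0)) i + 1) / 2) = _
          ring
        rw [h2, add_smul, one_smul]
      rw [hterm, Finset.sum_add_distrib, ht₀def]
      have hrepr : ∑ i, (wb.repr (x - v 0)) i • w i = x - v 0 := by
        conv_rhs => rw [← Module.Basis.sum_repr wb (x - v 0)]
        simp [hwbcoe]
      rw [hrepr]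
      abel
  · intro A
    have himg : ⇑T '' (⇑T.symm '' A) = A := by
      rw [← Set.image_comp]
      have : ⇑T ∘ ⇑T.symm = id := by
        funext z
        exact T.apply_symm_apply z
      rw [this, Set.image_id]
    have h1 : volume A = ENNReal.ofReal (2 ^ d * M) * volume (⇑T.symm '' A) := by
      conv_lhs => rw [← himg]
      rw [hvolT]
    rw [h1]
    calc volume (cornerSimplex d) * (ENNReal.ofReal (2 ^ d * M) * volume (⇑T.symm '' A))
        = ENNReal.ofReal (2 ^ d) * (ENNReal.ofReal M * volume (cornerSimplex d))
            * volume (⇑T.symm '' A) := by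
          rw [ENNReal.ofReal_mul (by positivity : (0:ℝ) ≤ (2:ℝ) ^ d)]
          ring
      _ ≤ ENNReal.ofReal (2 ^ d) * volume B * volume (⇑T.symm '' A) := by
          gcongr

/-- Replacing the cube by an arbitrary compact convex body `B` with nonempty interior:
there is a constant `c_d ∈ (0,1)` such that from any `(k, c_d·ε)`-net for `[0,1]^d` one
obtains an equally large family of `k`-flats stabbing every compact convex `Ξ` with
`vol(Ξ ∩ B) ≥ ε·vol(B)`. -/
theorem net_for_arbitrary_body (d k : ℕ) (hd : 1 ≤ d) (hk : k ≤ d - 1) :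
    ∃ c : ℝ, c ∈ Set.Ioo (0 : ℝ) 1 ∧
      ∀ B : Set (EuclideanSpace ℝ (Fin d)),
        IsCompact B → Convex ℝ B → (interior B).Nonempty →
        ∀ ε : ℝ, ε ∈ Set.Ioo (0 : ℝ) 1 →
        ∀ S : Finset (AffineSubspace ℝ (EuclideanSpace ℝ (Fin d))),
          (∀ f ∈ S, IsKFlat d k f) →
          IsKENet d (c * ε) (S : Set (AffineSubspace ℝ (EuclideanSpace ℝ (Fin d)))) →
          ∃ S' : Finset (AffineSubspace ℝ (EuclideanSpace ℝ (Fin d))),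
            (∀ f ∈ S', IsKFlat d k f) ∧ S'.card = S.card ∧
            ∀ Ξ : Set (EuclideanSpace ℝ (Fin d)), IsCompact Ξ → Convex ℝ Ξ →
              ENNReal.ofReal ε * volume B ≤ volume (Ξ ∩ B) →
              ∃ f ∈ S', (Ξ ∩ (f : Set (EuclideanSpace ℝ (Fin d)))).Nonempty := by
  classical
  have hΔpos := cornerSimplex_vol_pos d
  have hΔtop := cornerSimplex_vol_lt_top d
  set vΔ : ℝ := (volume (cornerSimplex d)).toReal with hvΔ
  have hvΔpos : 0 < vΔ := ENNReal.toReal_pos hΔpos.ne' hΔtop.ne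
  set c : ℝ := min (vΔ / 2 ^ d) (1 / 2) with hc
  have hcpos : 0 < c := lt_min (by positivity) (by norm_num)
  have hc1 : c < 1 := lt_of_le_of_lt (min_le_right _ _) (by norm_num)
  refine ⟨c, ⟨hcpos, hc1⟩, ?_⟩
  intro B hBc hBconv hBint ε hε S hSflat hSnet
  obtain ⟨T, hBsub, hTvol⟩ := exists_transform d hd B hBc hBconv hBint
  refine ⟨S.image (AffineSubspace.map T.toAffineMap), ?_, ?_, ?_⟩
  · intro f' hf'
    obtain ⟨g, hg, rfl⟩ := Finset.mem_image.1 hf'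
    obtain ⟨hne, hdim⟩ := hSflat g hg
    constructor
    · rw [AffineSubspace.coe_map]
      exact hne.image _
    · rw [AffineSubspace.map_direction, AffineEquiv.linear_toAffineMap,
        LinearEquiv.finrank_map_eq]
      exact hdim
  · apply Finset.card_image_of_injective
    intro a b hab
    have h2 := congrArg (AffineSubspace.map T.symm.toAffineMap) hab
    rw [AffineSubspace.map_map, AffineSubspace.map_map] at h2
    have hid : T.symm.toAffineMap.comp T.toAffineMap = AffineMap.id ℝ _ := by
      ext x
      simp
    rwa [hid, AffineSubspace.map_id, AffineSubspace.map_id] at h2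
  · intro Ξ hΞc hΞconv hΞvol
    set Ξ' : Set (EuclideanSpace ℝ (Fin d)) := ⇑T.symm '' Ξ with hΞ'def
    have hΞ'c : IsCompact Ξ' :=
      hΞc.image T.symm.toAffineMap.continuous_of_finiteDimensional
    have hΞ'conv : Convex ℝ Ξ' := Convex.affine_image T.symm.toAffineMap hΞconv
    have hsub1 : ⇑T.symm '' (Ξ ∩ B) ⊆ Ξ' ∩ unitCube d := by
      rintro _ ⟨y, ⟨hyΞ, hyB⟩, rfl⟩
      refine ⟨⟨y, hyΞ, rfl⟩, ?_⟩
      obtain ⟨u, hu, hTu⟩ := hBsub hyB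
      have hyu : T.symm y = u := by
        rw [← hTu]
        exact T.symm_apply_apply u
      rwa [hyu]
    have hBfin : volume B ≠ ⊤ := hBc.measure_lt_top.ne
    have hBpos : volume B ≠ 0 :=
      (lt_of_lt_of_le (isOpen_interior.measure_pos volume hBint)
        (measure_mono interior_subset)).ne'
    have hstep1 : volume B * (volume (cornerSimplex d) * ENNReal.ofReal ε)
        ≤ volume B * (ENNReal.ofReal ((2:ℝ) ^ d) * volume (Ξ' ∩ unitCube d)) := by
      calc volume B * (volume (cornerSimplex d) * ENNReal.ofReal ε)
          = volume (cornerSimplex d) * (ENNReal.ofReal ε * volume B) := by ring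
        _ ≤ volume (cornerSimplex d) * volume (Ξ ∩ B) := by gcongr
        _ ≤ ENNReal.ofReal ((2:ℝ) ^ d) * volume B * volume (⇑T.symm '' (Ξ ∩ B)) :=
            hTvol (Ξ ∩ B)
        _ ≤ ENNReal.ofReal ((2:ℝ) ^ d) * volume B * volume (Ξ' ∩ unitCube d) :=
            mul_le_mul_right (measure_mono hsub1) _
        _ = volume B * (ENNReal.ofReal ((2:ℝ) ^ d) * volume (Ξ' ∩ unitCube d)) := by ring
    have hcanc : volume (cornerSimplex d) * ENNReal.ofReal ε
        ≤ ENNReal.ofReal ((2:ℝ) ^ d) * volume (Ξ' ∩ unitCube d) :=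
      (ENNReal.mul_le_mul_iff_right hBpos hBfin).1 hstep1
    have hnetbound : ENNReal.ofReal (c * ε) ≤ volume (Ξ' ∩ unitCube d) := by
      have h2d0 : ENNReal.ofReal ((2:ℝ) ^ d) ≠ 0 := by
        simp only [ne_eq, ENNReal.ofReal_eq_zero, not_le]
        positivity
      have h2dt : ENNReal.ofReal ((2:ℝ) ^ d) ≠ ⊤ := ENNReal.ofReal_ne_top
      refine (ENNReal.mul_le_mul_iff_right h2d0 h2dt).1 ?_
      calc ENNReal.ofReal ((2:ℝ) ^ d) * ENNReal.ofReal (c * ε)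
          = ENNReal.ofReal ((2:ℝ) ^ d * (c * ε)) := by
            rw [ENNReal.ofReal_mul (by positivity : (0:ℝ) ≤ (2:ℝ) ^ d)]
        _ ≤ ENNReal.ofReal (vΔ * ε) := by
            apply ENNReal.ofReal_le_ofReal
            have hcle : c ≤ vΔ / 2 ^ d := min_le_left _ _
            have hεpos : 0 ≤ ε := hε.1.le
            have h2dpos : (0:ℝ) < 2 ^ d := by positivity
            calc (2:ℝ) ^ d * (c * ε) ≤ (2:ℝ) ^ d * (vΔ / 2 ^ d * ε) := by
                  apply mul_le_mul_of_nonneg_left _ h2dpos.le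
                  exact mul_le_mul_of_nonneg_right hcle hεpos
              _ = vΔ * ε := by field_simp
        _ = ENNReal.ofReal vΔ * ENNReal.ofReal ε := by
            rw [ENNReal.ofReal_mul hvΔpos.le]
        _ ≤ volume (cornerSimplex d) * ENNReal.ofReal ε := by
            gcongr
            exact ENNReal.ofReal_toReal_le
        _ ≤ ENNReal.ofReal ((2:ℝ) ^ d) * volume (Ξ' ∩ unitCube d) := hcanc
    obtain ⟨f, hfS, y, hyΞ', hyf⟩ := hSnet Ξ' hΞ'c hΞ'conv hnetbound
    refine ⟨f.map T.toAffineMap, Finset.mem_image_of_mem _ hfS, ?_⟩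
    obtain ⟨z, hz, hzy⟩ := hyΞ'
    refine ⟨T y, ?_, ?_⟩
    · have : T y = z := by
        rw [← hzy]
        exact T.apply_symm_apply z
      rwa [this]
    · exact AffineSubspace.mem_map.2 ⟨y, hyf, rfl⟩
end
end

section
/- Let d ≥ 2. For every ε ∈ (0,1) there exists a finite nonempty set P ⊆ ℝ^d such that every set L of lines (1-flats) in ℝ^d with the property that every compact convex set containing at least ε·|P| points of P is intersected by some line of L, satisfies |L| ≥ ⌊1/ε⌋/2. -/
open MeasureTheory

noncomputable section

/-- A lower bound of `⌊1/ε⌋/2` for weak `(1,ε)`-nets of lines in the general (point-set)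
setting: for every `ε ∈ (0,1)` there is a finite point set `P ⊆ ℝ^d` such that any family
of lines stabbing every compact convex set containing at least `ε·|P|` points of `P` must
have at least `⌊1/ε⌋/2` lines. -/
theorem lines_lower_bound_general (d : ℕ) (hd : 2 ≤ d) (ε : ℝ)
    (hε : ε ∈ Set.Ioo (0 : ℝ) 1) :
    ∃ P : Finset (EuclideanSpace ℝ (Fin d)), P.Nonempty ∧
      ∀ L : Finset (AffineSubspace ℝ (EuclideanSpace ℝ (Fin d))),
        (∀ f ∈ L, IsKFlat d 1 f) →
        (∀ C : Set (EuclideanSpace ℝ (Fin d)), IsCompact C → Convex ℝ C →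
          ε * (P.card : ℝ) ≤ (((P : Set (EuclideanSpace ℝ (Fin d))) ∩ C).ncard : ℝ) →
          ∃ f ∈ L, (C ∩ (f : Set (EuclideanSpace ℝ (Fin d)))).Nonempty) →
        (⌊(1 : ℝ) / ε⌋₊ : ℝ) / 2 ≤ (L.card : ℝ) := by
  classical
  obtain ⟨hε0, hε1⟩ := hε
  set n : ℕ := ⌊(1 : ℝ) / ε⌋₊ with hn
  have hεn : ε * n ≤ 1 := by
    have h1 : (n : ℝ) ≤ 1 / ε := Nat.floor_le (by positivity)
    calc ε * n ≤ ε * (1 / ε) := by nlinarith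
    _ = 1 := by field_simp
  have hn1 : 1 ≤ n := by
    rw [hn]
    exact Nat.le_floor (by rw [le_div_iff₀ hε0]; push_cast; nlinarith)
  -- the two distinguished coordinates
  let i0 : Fin d := ⟨0, by omega⟩
  let i1 : Fin d := ⟨1, by omega⟩
  have hi01 : i0 ≠ i1 := by simp [i0, i1, Fin.ext_iff]
  -- points on a parabola
  let p : ℕ → EuclideanSpace ℝ (Fin d) := fun k =>
    WithLp.toLp 2 (fun j => if j = i0 then (k : ℝ) else if j = i1 then (k : ℝ) ^ 2 else 0)
  have hp0 : ∀ k, p k i0 = (k : ℝ) := fun k => by simp [p]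
  have hp1 : ∀ k, p k i1 = (k : ℝ) ^ 2 := fun k => by simp [p, hi01.symm]
  have hpinj : Function.Injective p := by
    intro a b hab
    have : p a i0 = p b i0 := by rw [hab]
    rw [hp0, hp0] at this
    exact Nat.cast_injective this
  refine ⟨(Finset.range n).image p, ?_, ?_⟩
  · exact ⟨p 0, Finset.mem_image_of_mem p (Finset.mem_range.2 (by omega))⟩
  intro L hL hstab
  set P : Finset (EuclideanSpace ℝ (Fin d)) := (Finset.range n).image p with hP
  have hPcard : P.card = n := by
    rw [hP, Finset.card_image_of_injective _ hpinj, Finset.card_range]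
  -- every point of P is covered by some line of L
  have hcov : ∀ k < n, ∃ f ∈ L, p k ∈ f := by
    intro k hk
    have hmem : p k ∈ P := Finset.mem_image_of_mem p (Finset.mem_range.2 hk)
    have h1 : ((P : Set (EuclideanSpace ℝ (Fin d))) ∩ {p k}).ncard = 1 := by
      rw [Set.inter_eq_right.2 (by simpa using hmem)]
      simp
    obtain ⟨f, hf, x, hx1, hx2⟩ := hstab {p k} isCompact_singleton (convex_singleton _)
      (by rw [h1, hPcard]; exact_mod_cast hεn)
    rw [Set.mem_singleton_iff] at hx1
    exact ⟨f, hf, hx1 ▸ hx2⟩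
  let g : ℕ → AffineSubspace ℝ (EuclideanSpace ℝ (Fin d)) := fun k =>
    if h : ∃ f ∈ L, p k ∈ f then h.choose else ⊥
  have hgL : ∀ k < n, g k ∈ L ∧ p k ∈ g k := by
    intro k hk
    have h := hcov k hk
    simp only [g, dif_pos h]
    exact ⟨h.choose_spec.1, h.choose_spec.2⟩
  -- at most two points per line
  have hfib : ∀ f ∈ L, ((Finset.range n).filter (fun k => g k = f)).card ≤ 2 := by
    intro f hf
    by_contra hcon
    push_neg at hcon
    obtain ⟨a, ha, b, hb, c, hc, hab, hac, hbc⟩ := Finset.two_lt_card.1 hcon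
    simp only [Finset.mem_filter, Finset.mem_range] at ha hb hc
    have hpa : p a ∈ f := ha.2 ▸ (hgL a ha.1).2
    have hpb : p b ∈ f := hb.2 ▸ (hgL b hb.1).2
    have hpc : p c ∈ f := hc.2 ▸ (hgL c hc.1).2
    -- collinearity
    have hspan : affineSpan ℝ ({p a, p b, p c} : Set (EuclideanSpace ℝ (Fin d))) ≤ f :=
      affineSpan_le.2 (by
        intro x hx
        rcases hx with rfl | rfl | rfl <;> assumption)
    have hdir : vectorSpan ℝ ({p a, p b, p c} : Set (EuclideanSpace ℝ (Fin d))) ≤ f.direction := by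
      rw [← direction_affineSpan]
      exact AffineSubspace.direction_le hspan
    have hcol : Collinear ℝ ({p a, p b, p c} : Set (EuclideanSpace ℝ (Fin d))) := by
      unfold Collinear
      calc Module.rank ℝ (vectorSpan ℝ ({p a, p b, p c} : Set (EuclideanSpace ℝ (Fin d))))
          ≤ Module.rank ℝ f.direction := Submodule.rank_mono hdir
        _ = (Module.finrank ℝ f.direction : Cardinal) := (Module.finrank_eq_rank ℝ _).symm
        _ = 1 := by rw [(hL f hf).2]; simp
    rw [collinear_iff_of_mem (Set.mem_insert (p a) _)] at hcol
    obtain ⟨v, hv⟩ := hcol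
    obtain ⟨rb, hrb⟩ := hv (p b) (by simp)
    obtain ⟨rc, hrc⟩ := hv (p c) (by simp)
    have eb0 : (b : ℝ) = rb * v i0 + a := by
      have : p b i0 = (rb • v +ᵥ p a) i0 := by rw [hrb]
      simpa [hp0, PiLp.add_apply, PiLp.smul_apply, smul_eq_mul] using this
    have eb1 : (b : ℝ) ^ 2 = rb * v i1 + (a : ℝ) ^ 2 := by
      have : p b i1 = (rb • v +ᵥ p a) i1 := by rw [hrb]
      simpa [hp1, PiLp.add_apply, PiLp.smul_apply, smul_eq_mul] using this
    have ec0 : (c : ℝ) = rc * v i0 + a := by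
      have : p c i0 = (rc • v +ᵥ p a) i0 := by rw [hrc]
      simpa [hp0, PiLp.add_apply, PiLp.smul_apply, smul_eq_mul] using this
    have ec1 : (c : ℝ) ^ 2 = rc * v i1 + (a : ℝ) ^ 2 := by
      have : p c i1 = (rc • v +ᵥ p a) i1 := by rw [hrc]
      simpa [hp1, PiLp.add_apply, PiLp.smul_apply, smul_eq_mul] using this
    have h5 : ((b : ℝ) - a) * ((c : ℝ) ^ 2 - (a : ℝ) ^ 2)
        = ((c : ℝ) - a) * ((b : ℝ) ^ 2 - (a : ℝ) ^ 2) := by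
      have e1 : (b : ℝ) - a = rb * v i0 := by linarith
      have e2 : (b : ℝ) ^ 2 - (a : ℝ) ^ 2 = rb * v i1 := by linarith
      have e3 : (c : ℝ) - a = rc * v i0 := by linarith
      have e4 : (c : ℝ) ^ 2 - (a : ℝ) ^ 2 = rc * v i1 := by linarith
      rw [e1, e2, e3, e4]; ring
    have key : ((b : ℝ) - a) * ((c : ℝ) - a) * ((c : ℝ) - b) = 0 := by
      linear_combination h5
    have hba : (b : ℝ) - a ≠ 0 := sub_ne_zero.2 (by exact_mod_cast hab.symm)
    have hca : (c : ℝ) - a ≠ 0 := sub_ne_zero.2 (by exact_mod_cast hac.symm)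
    have hcb : (c : ℝ) - b ≠ 0 := sub_ne_zero.2 (by exact_mod_cast hbc.symm)
    rcases mul_eq_zero.1 key with h | h
    · rcases mul_eq_zero.1 h with h | h
      exacts [hba h, hca h]
    · exact hcb h
  have hcount : n ≤ 2 * L.card := by
    have := Finset.card_le_mul_card_image_of_maps_to
      (f := g) (s := Finset.range n) (t := L)
      (fun k hk => (hgL k (Finset.mem_range.1 hk)).1) 2
      (fun f hf => hfib f hf)
    simpa using this
  have : (n : ℝ) ≤ 2 * L.card := by exact_mod_cast hcount
  rw [hn] at *
  linarith
end
end
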